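/- Let Θ be a finite simple oriented graph containing no two distinct simple cycles connected by an oriented path of length ≥ 0, and fix any linear order on its vertex set V. Let x be a non-cycle vertex of Θ that is connected with some simple cycle by an oriented path, and let k_x be defined as in the context. Then in every reduced word w ∈ V*, the letter x occurs at most k_x times. -/

import Mathlib

open Relation

section Defs

variable {V : Type*}

/-- Simplicity of an oriented graph: no loops and at most one direction between two vertices. -/
def SimpleOriented (E : V → V → Prop) : Prop := ∀ x y, E x y → ¬ E y x

/-- A simple cycle: pairwise distinct vertices `x₁ → x₂ → ⋯ → x_N → x₁` with `N ≥ 3`. -/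
def IsSimpleCycle (E : V → V → Prop) (c : List V) : Prop :=
  3 ≤ c.length ∧ c.Nodup ∧ c.Chain' E ∧ ∀ h : c ≠ [], E (c.getLast h) (c.head h)

def IsCycleVertex (E : V → V → Prop) (x : V) : Prop := ∃ c, IsSimpleCycle E c ∧ x ∈ c

/-- Two distinct simple cycles connected by an oriented path of length ≥ 0. -/
def TwoCyclesConnected (E : V → V → Prop) : Prop :=
  ∃ c c' : List V, IsSimpleCycle E c ∧ IsSimpleCycle E c' ∧ ¬ c.IsRotated c' ∧
    ∃ a ∈ c, ∃ b ∈ c', Relation.ReflTransGen E a b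

/-- Defining relations of the Hecke–Kiselman monoid. -/
def hkRel (E : V → V → Prop) : FreeMonoid V → FreeMonoid V → Prop := fun a b =>
  (∃ x : V, a = .of x * .of x ∧ b = .of x) ∨
  (∃ x y : V, x ≠ y ∧ ¬ E x y ∧ ¬ E y x ∧ a = .of x * .of y ∧ b = .of y * .of x) ∨
  (∃ x y : V, E x y ∧ a = .of x * .of y * .of x ∧ b = .of x * .of y) ∨
  (∃ x y : V, E x y ∧ a = .of y * .of x * .of y ∧ b = .of x * .of y)

/-- The Hecke–Kiselman monoid of the graph. -/
def HKmonoid (E : V → V → Prop) : Type _ := (conGen (hkRel E)).Quotient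

instance (E : V → V → Prop) : Monoid (HKmonoid E) :=
  inferInstanceAs (Monoid (conGen (hkRel E)).Quotient)

/-- Canonical projection from the free monoid. -/
def hkProj (E : V → V → Prop) : FreeMonoid V →* HKmonoid E := (conGen (hkRel E)).mk'

/-- Image in `HKmonoid E` of a word over `V`. -/
def hkWord (E : V → V → Prop) (w : List V) : HKmonoid E := hkProj E (FreeMonoid.ofList w)

/-- Growth function: number of elements represented by words of length at most `n`. -/
noncomputable def hkGrowth (E : V → V → Prop) (n : ℕ) : ℕ :=
  (hkWord E '' {w : List V | w.length ≤ n}).ncard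

/-- `w ↛ t` -/
def NArrowTo (E : V → V → Prop) (w : List V) (t : V) : Prop :=
  t ∉ w ∧ ∀ x ∈ w, ¬ E x t

/-- `t ↛ w` -/
def NArrowFrom (E : V → V → Prop) (t : V) (w : List V) : Prop :=
  t ∉ w ∧ ∀ y ∈ w, ¬ E t y

/-- `t ↮ w` -/
def NConn (E : V → V → Prop) (t : V) (w : List V) : Prop :=
  NArrowTo E w t ∧ NArrowFrom E t w

/-- A word is reduced if it contains no factor of the forms (i), (ii), (iii). -/
def Reduced (E : V → V → Prop) (lt : V → V → Prop) (w : List V) : Prop :=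
  (¬ ∃ (p u q : List V) (t : V), w = p ++ [t] ++ u ++ [t] ++ q ∧ NArrowTo E u t) ∧
  (¬ ∃ (p u q : List V) (t : V), w = p ++ [t] ++ u ++ [t] ++ q ∧ NArrowFrom E t u) ∧
  (¬ ∃ (p u q : List V) (t₁ t₂ : V), w = p ++ [t₁] ++ u ++ [t₂] ++ q ∧ lt t₂ t₁ ∧
      NConn E t₂ ([t₁] ++ u))

/-- `m`-th power of a word. -/
def wpow (w : List V) (m : ℕ) : List V := (List.replicate m w).flatten

open Classical in
/-- The number `k_x` of paths ending at (resp. beginning at) `x`. -/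
noncomputable def kx (E : V → V → Prop) (x : V) : ℕ :=
  if ∃ a, IsCycleVertex E a ∧ Relation.ReflTransGen E x a then
    {p : List V | p ≠ [] ∧ p.Chain' E ∧ p.getLast? = some x}.ncard
  else
    {p : List V | p ≠ [] ∧ p.Chain' E ∧ p.head? = some x}.ncard

open Classical in
/-- The invariant `s(Θ) = Σ_j (Σ_{x ∈ 𝒜_j} k_x + 1)` with respect to an enumeration of
the simple cycles; `𝒜_j` is the set of (non-cycle) vertices connected by an edge with `C_j`. -/
noncomputable def sTheta [Fintype V] (E : V → V → Prop) {k : ℕ} (cycles : Fin k → List V) : ℕ :=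
  ∑ j : Fin k,
    ((∑ x ∈ Finset.univ.filter
        (fun x => ¬ IsCycleVertex E x ∧ ∃ a ∈ cycles j, E x a ∨ E a x), kx E x) + 1)

end Defs

section Aux

open List Relation

variable {V : Type*} {E : V → V → Prop}

private lemma reach_of_head : ∀ (l : List V) (a : V), (a :: l).Chain' E →
    ∀ b ∈ a :: l, ReflTransGen E a b := by
  intro l
  induction l with
  | nil =>
    intro a _ b hb
    simp only [List.mem_singleton] at hb
    subst hb; exact ReflTransGen.refl
  | cons c t ih =>
    intro a h b hb
    rcases List.mem_cons.1 hb with rfl | hb'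
    · exact ReflTransGen.refl
    · exact ReflTransGen.head (List.isChain_cons_cons.1 h).1 (ih c (List.isChain_cons_cons.1 h).2 b hb')

private lemma reach_last : ∀ (l : List V), l.Chain' E → ∀ a ∈ l, ∀ b, l.getLast? = some b →
    ReflTransGen E a b := by
  intro l
  induction l with
  | nil => intro _ a ha; simp at ha
  | cons c t ih =>
    intro h a ha b hb
    cases t with
    | nil =>
      simp only [List.mem_singleton] at ha
      simp only [List.getLast?_singleton, Option.some.injEq] at hb
      subst ha; subst hb; exact ReflTransGen.refl
    | cons d t' =>
      have hb' : (d :: t').getLast? = some b := by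
        simpa [List.getLast?_cons_cons] using hb
      rcases List.mem_cons.1 ha with rfl | ha'
      · exact ReflTransGen.head (List.isChain_cons_cons.1 h).1
          (ih (List.isChain_cons_cons.1 h).2 d (by simp) b hb')
      · exact ih (List.isChain_cons_cons.1 h).2 a ha' b hb'

private lemma cycle_reach {c : List V} {a b : V} (hc : IsSimpleCycle E c) (ha : a ∈ c)
    (hb : b ∈ c) : ReflTransGen E a b := by
  obtain ⟨hlen, hnd, hch, hcyc⟩ := hc
  have hne : c ≠ [] := by rintro rfl; simp at hlen
  have h1 : ReflTransGen E a (c.getLast hne) :=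
    reach_last c hch a ha _ (List.getLast?_eq_getLast hne)
  have h2 : ReflTransGen E (c.getLast hne) (c.head hne) := ReflTransGen.single (hcyc hne)
  have h3 : ReflTransGen E (c.head hne) b := by
    cases c with
    | nil => exact absurd rfl hne
    | cons y t => exact reach_of_head t y hch b hb
  exact (h1.trans h2).trans h3

private lemma exists_nodup_path {a b : V} (h : ReflTransGen E a b) :
    ∃ p : List V, p.Chain' E ∧ p.Nodup ∧ p.head? = some a ∧ p.getLast? = some b := by
  induction h with
  | refl => exact ⟨[a], List.isChain_singleton _, by simp, rfl, rfl⟩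
  | @tail b c hab hbc ih =>
    obtain ⟨p, hch, hnd, hh, hl⟩ := ih
    by_cases hcp : c ∈ p
    · obtain ⟨s, t, rfl⟩ := List.append_of_mem hcp
      refine ⟨s ++ [c], ?_, ?_, ?_, List.getLast?_concat⟩
      · exact hch.prefix ⟨t, by simp⟩
      · exact hnd.sublist ((List.cons_sublist_cons.mpr (List.nil_sublist t)).append_left s)
      · simp only [List.head?_append] at hh ⊢
        simpa using hh
    · refine ⟨p ++ [c], hch.append (by simp) ?_, ?_, ?_, List.getLast?_concat⟩
      · intro u hu v hv
        simp only [List.head?_cons, Option.mem_def, Option.some.injEq] at hv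
        rw [hl] at hu
        simp only [Option.mem_def, Option.some.injEq] at hu
        subst hu; subst hv; exact hbc
      · simp [List.nodup_append, hnd, hcp]; rintro _ ha rfl; exact hcp ha
      · have hne : p ≠ [] := by rintro rfl; simp at hh
        simp only [List.head?_append]
        rw [hh]; rfl

private lemma closed_walk_cycle (hs : SimpleOriented E) {a b : V} (hab : ReflTransGen E a b)
    (hba : E b a) : ∃ c, IsSimpleCycle E c ∧ a ∈ c ∧ b ∈ c := by
  obtain ⟨p, hch, hnd, hh, hl⟩ := exists_nodup_path hab
  have hne : p ≠ [] := by rintro rfl; simp at hh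
  have hha : p.head hne = a := by
    rw [List.head?_eq_head hne] at hh; exact Option.some.inj hh
  have hlb : p.getLast hne = b := by
    rw [List.getLast?_eq_getLast hne] at hl; exact Option.some.inj hl
  have ham : a ∈ p := hha ▸ List.head_mem hne
  have hbm : b ∈ p := hlb ▸ List.getLast_mem hne
  refine ⟨p, ⟨?_, hnd, hch, ?_⟩, ham, hbm⟩
  · rcases p with - | ⟨u, - | ⟨v, - | ⟨w', t⟩⟩⟩
    · exact absurd rfl hne
    · exfalso
      have hua : u = a := by simpa using hh
      have hub : u = b := by simpa using hl
      subst hua; subst hub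
      exact hs u u hba hba
    · exfalso
      have hua : u = a := by simpa using hh
      have hvb : v = b := by simpa using hl
      subst hua; subst hvb
      exact hs u v (List.isChain_cons_cons.1 hch).1 hba
    · simp only [List.length_cons]; omega
  · intro h
    have h1 : p.getLast h = b := by
      rw [List.getLast?_eq_getLast h] at hl; exact Option.some.inj hl
    have h2 : p.head h = a := by
      rw [List.head?_eq_head h] at hh; exact Option.some.inj hh
    rw [h1, h2]; exact hba

private lemma no_cycle_above (hs : SimpleOriented E) (hnc : ¬ TwoCyclesConnected E)
    {x : V} (hx : ¬ IsCycleVertex E x) {a : V} (ha : IsCycleVertex E a)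
    (hxa : ReflTransGen E x a) {z : V} (hz : IsCycleVertex E z)
    (hzx : ReflTransGen E z x) : False := by
  obtain ⟨C, hC, hzC⟩ := hz
  obtain ⟨C', hC', haC'⟩ := ha
  have hrot : C.IsRotated C' := by
    by_contra hrot
    exact hnc ⟨C, C', hC, hC', hrot, z, hzC, a, haC', hzx.trans hxa⟩
  have haC : a ∈ C := hrot.mem_iff.2 haC'
  have hxz : ReflTransGen E x z := hxa.trans (cycle_reach hC haC hzC)
  rcases hzx.cases_tail with heq | ⟨y, hzy, hyx⟩
  · exact hx (heq ▸ (⟨C, hC, hzC⟩ : IsCycleVertex E z))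
  · obtain ⟨c, hc, hxc, -⟩ := closed_walk_cycle hs (hxz.trans hzy) hyx
    exact hx ⟨c, hc, hxc⟩

private lemma exists_dup_split {l : List V} (h : ¬ l.Nodup) :
    ∃ (d : V) (l₁ l₂ l₃ : List V), l = l₁ ++ d :: l₂ ++ d :: l₃ := by
  induction l with
  | nil => simp at h
  | cons a t ih =>
    by_cases ha : a ∈ t
    · obtain ⟨s, u, rfl⟩ := List.append_of_mem ha
      exact ⟨a, [], s, u, by simp⟩
    · have ht : ¬ t.Nodup := fun hnd => h (List.nodup_cons.mpr ⟨ha, hnd⟩)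
      obtain ⟨d, l₁, l₂, l₃, rfl⟩ := ih ht
      exact ⟨d, a :: l₁, l₂, l₃, by simp⟩

private lemma chain_nodup_of_getLast (hs : SimpleOriented E) (hnc : ¬ TwoCyclesConnected E)
    {x : V} (hx : ¬ IsCycleVertex E x) {a : V} (ha : IsCycleVertex E a)
    (hxa : ReflTransGen E x a) {p : List V} (hch : p.Chain' E)
    (hl : p.getLast? = some x) : p.Nodup := by
  by_contra h
  obtain ⟨d, l₁, l₂, l₃, rfl⟩ := exists_dup_split h
  have hseg : (d :: (l₂ ++ [d])).Chain' E := hch.infix ⟨l₁, l₃, by simp⟩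
  have hm0 : (l₂ ++ [d]).head? = some ((l₂ ++ [d]).head (by simp)) :=
    List.head?_eq_head _
  have hdh : E d ((l₂ ++ [d]).head (by simp)) :=
    (List.isChain_cons.1 hseg).1 _ hm0
  have hch2 : (l₂ ++ [d]).Chain' E := (List.isChain_cons.1 hseg).2
  have hh0d : ReflTransGen E ((l₂ ++ [d]).head (by simp)) d :=
    reach_last _ hch2 _ (List.head_mem _) d List.getLast?_concat
  obtain ⟨c, hc, -, hdc⟩ := closed_walk_cycle hs hh0d hdh
  have hdx : ReflTransGen E d x := reach_last _ hch d (by simp) x hl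
  exact no_cycle_above hs hnc hx ha hxa ⟨c, hc, hdc⟩ hdx

/-- The set of oriented paths ending at `x`. -/
private def SxF (E : V → V → Prop) (x : V) : Set (List V) :=
  {p : List V | p ≠ [] ∧ p.Chain' E ∧ p.getLast? = some x}

private noncomputable def kxF (E : V → V → Prop) (x : V) : ℕ := (SxF E x).ncard

private lemma SxF_finite [Fintype V] (hs : SimpleOriented E) (hnc : ¬ TwoCyclesConnected E)
    {x : V} (hx : ¬ IsCycleVertex E x) {a : V} (ha : IsCycleVertex E a)
    (hxa : ReflTransGen E x a) : (SxF E x).Finite := by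
  apply (List.finite_length_le V (Fintype.card V)).subset
  rintro p ⟨-, hch, hl⟩
  exact (chain_nodup_of_getLast hs hnc hx ha hxa hch hl).length_le_card

private lemma ncard_biUnion_eq {α ι : Type*} [DecidableEq ι] (P : Finset ι)
    (T : ι → Set α) :
    (∀ i ∈ P, (T i).Finite) → (∀ i ∈ P, ∀ j ∈ P, i ≠ j → Disjoint (T i) (T j)) →
    (⋃ i ∈ P, T i).ncard = ∑ i ∈ P, (T i).ncard := by
  induction P using Finset.induction_on with
  | empty => intro _ _; simp
  | @insert a s ha ih =>
    intro hfin hdisj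
    have hfin' : ∀ i ∈ s, (T i).Finite := fun i hi => hfin i (Finset.mem_insert_of_mem hi)
    rw [Finset.set_biUnion_insert, Finset.sum_insert ha,
      Set.ncard_union_eq ?_ (hfin a (Finset.mem_insert_self a s)) ?_,
      ih hfin' (fun i hi j hj hij =>
        hdisj i (Finset.mem_insert_of_mem hi) j (Finset.mem_insert_of_mem hj) hij)]
    · refine Set.disjoint_iUnion_right.2 fun i => Set.disjoint_iUnion_right.2 fun hi => ?_
      exact hdisj a (Finset.mem_insert_self a s) i (Finset.mem_insert_of_mem hi)
        (fun h => ha (h ▸ hi))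
    · exact Set.Finite.biUnion s.finite_toSet hfin'

private lemma kxF_succ_le [Fintype V] (hs : SimpleOriented E) (hnc : ¬ TwoCyclesConnected E)
    {x : V} (hx : ¬ IsCycleVertex E x) {a : V} (ha : IsCycleVertex E a)
    (hxa : ReflTransGen E x a) (P : Finset V) (hP : ∀ y, y ∈ P ↔ E y x) :
    1 + ∑ y ∈ P, kxF E y ≤ kxF E x := by
  classical
  set T : V → Set (List V) := fun y => (fun q => q ++ [x]) '' SxF E y with hT
  have hfinx : (SxF E x).Finite := SxF_finite hs hnc hx ha hxa
  have hTsub : ∀ y ∈ P, T y ⊆ SxF E x := by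
    rintro y hy p ⟨q, ⟨hqne, hqch, hql⟩, rfl⟩
    refine ⟨by simp, hqch.append (by simp) ?_, List.getLast?_concat⟩
    intro u hu v hv
    simp only [List.head?_cons, Option.mem_def, Option.some.injEq] at hv
    rw [hql] at hu
    simp only [Option.mem_def, Option.some.injEq] at hu
    subst hu; subst hv
    exact (hP y).1 hy
  have hins : insert [x] (⋃ y ∈ P, T y) ⊆ SxF E x := by
    rintro p hp
    rcases Set.mem_insert_iff.1 hp with rfl | hp'
    · exact ⟨by simp, List.isChain_singleton _, rfl⟩
    · obtain ⟨y, hy, hpy⟩ := Set.mem_iUnion₂.1 hp'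
      exact hTsub y hy hpy
  have hfinU : (⋃ y ∈ P, T y).Finite :=
    hfinx.subset (Set.iUnion₂_subset hTsub)
  have hnotmem : ([x] : List V) ∉ ⋃ y ∈ P, T y := by
    intro h
    obtain ⟨y, _, q, hq, heq⟩ := Set.mem_iUnion₂.1 h
    have : q.length + 1 = 1 := by
      have := congrArg List.length heq; simpa using this
    have hq0 : q = [] := by
      cases q with
      | nil => rfl
      | cons _ _ => simp at this
    exact hq.1 hq0
  have h1 : (⋃ y ∈ P, T y).ncard + 1 ≤ (SxF E x).ncard := by
    have := Set.ncard_le_ncard hins hfinx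
    rwa [Set.ncard_insert_of_notMem hnotmem hfinU] at this
  have h2 : (⋃ y ∈ P, T y).ncard = ∑ y ∈ P, (T y).ncard := by
    refine ncard_biUnion_eq P T (fun y hy => hfinx.subset (hTsub y hy)) ?_
    intro y hy z hz hyz
    rw [Set.disjoint_left]
    rintro p ⟨q, hq, rfl⟩ ⟨q', hq', heq⟩
    have hqq : q' = q := List.append_left_injective [x] heq
    subst hqq
    have : some y = some z := by rw [← hq.2.2, ← hq'.2.2]
    exact hyz (Option.some.inj this)
  have h3 : ∀ y ∈ P, (T y).ncard = kxF E y := fun y _ =>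
    Set.ncard_image_of_injective _ (List.append_left_injective [x])
  have h4 : ∑ y ∈ P, (T y).ncard = ∑ y ∈ P, kxF E y := Finset.sum_congr rfl h3
  rw [kxF]
  omega

private lemma first_occ {x : V} [DecidableEq V] :
    ∀ {w : List V}, x ∈ w → ∃ p r, w = p ++ x :: r ∧ x ∉ p := by
  intro w hw
  induction w with
  | nil => simp at hw
  | cons a t ih =>
    by_cases hax : a = x
    · exact ⟨[], t, by simp [hax], by simp⟩
    · have hxt : x ∈ t := by
        rcases List.mem_cons.1 hw with h | h
        · exact absurd h.symm hax
        · exact h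
      obtain ⟨p, r, rfl, hxp⟩ := ih hxt
      refine ⟨a :: p, r, rfl, ?_⟩
      intro hmem
      rcases List.mem_cons.1 hmem with h | h
      · exact hax h.symm
      · exact hxp h

private lemma count_le_aux [DecidableEq V] (x : V) (P : Finset V)
    (hP : ∀ y, y ∈ P ↔ E y x) (hxP : x ∉ P) :
    ∀ (n : ℕ) (w : List V), w.length ≤ n →
      (∀ p u q, w = p ++ [x] ++ u ++ [x] ++ q → x ∈ u ∨ ∃ y ∈ u, E y x) →
      ∀ p r, w = p ++ x :: r → x ∉ p →
      w.count x ≤ 1 + ∑ y ∈ P, r.count y := by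
  intro n
  induction n with
  | zero =>
    intro w hlen _ p r hw _
    subst hw; simp at hlen
  | succ n ih =>
    intro w hlen hw p r hwpr hxp
    subst hwpr
    have hcx : (p ++ x :: r).count x = 1 + r.count x := by
      rw [List.count_append, List.count_cons_self, List.count_eq_zero.2 hxp]
      omega
    by_cases hxr : x ∈ r
    · obtain ⟨u, s, rfl, hxu⟩ := first_occ hxr
      have hy : x ∈ u ∨ ∃ y ∈ u, E y x := by
        refine hw p u s ?_
        simp
      rcases hy with h | ⟨y₀, hy₀u, hy₀⟩
      · exact absurd h hxu
      have hrlen : (u ++ x :: s).length ≤ n := by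
        simp only [List.length_append, List.length_cons] at hlen ⊢
        omega
      have hwr : ∀ p' u' q', u ++ x :: s = p' ++ [x] ++ u' ++ [x] ++ q' →
          x ∈ u' ∨ ∃ y ∈ u', E y x := by
        intro p' u' q' h
        refine hw (p ++ x :: p') u' q' ?_
        rw [h]
        simp
      have hIH := ih (u ++ x :: s) hrlen hwr u s rfl hxu
      have hsum : ∀ y ∈ P, (u ++ x :: s).count y = u.count y + s.count y := by
        intro y hy
        have hyx : y ≠ x := fun h => hxP (h ▸ hy)
        simp [List.count_append, List.count_cons, hyx, Ne.symm hyx]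
      have hge : 1 ≤ ∑ y ∈ P, u.count y := by
        have h1 : 0 < u.count y₀ := List.count_pos_iff.2 hy₀u
        have h2 : u.count y₀ ≤ ∑ y ∈ P, u.count y :=
          Finset.single_le_sum (f := fun y => u.count y) (fun i _ => Nat.zero_le _) ((hP y₀).2 hy₀)
        omega
      have hsplit : ∑ y ∈ P, (u ++ x :: s).count y
          = ∑ y ∈ P, u.count y + ∑ y ∈ P, s.count y := by
        rw [← Finset.sum_add_distrib]
        exact Finset.sum_congr rfl hsum
      omega
    · rw [hcx, List.count_eq_zero.2 hxr]
      omega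

private lemma count_le_main [DecidableEq V] (hs : SimpleOriented E) (x : V) (P : Finset V)
    (hP : ∀ y, y ∈ P ↔ E y x) (w : List V)
    (hw : ∀ p u q, w = p ++ [x] ++ u ++ [x] ++ q → x ∈ u ∨ ∃ y ∈ u, E y x) :
    w.count x ≤ 1 + ∑ y ∈ P, w.count y := by
  have hxP : x ∉ P := fun h => hs x x ((hP x).1 h) ((hP x).1 h)
  by_cases hxw : x ∈ w
  · obtain ⟨p, r, rfl, hxp⟩ := first_occ hxw
    have h1 := count_le_aux x P hP hxP (p ++ x :: r).length _ le_rfl hw p r rfl hxp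
    have h2 : ∑ y ∈ P, r.count y ≤ ∑ y ∈ P, (p ++ x :: r).count y := by
      refine Finset.sum_le_sum fun y _ => ?_
      have hsub : r <+ p ++ x :: r :=
        (List.sublist_cons_self x r).trans (List.sublist_append_right p (x :: r))
      exact hsub.count_le y
    omega
  · simp [List.count_eq_zero.2 hxw]

private lemma fwd_main [Fintype V] [DecidableEq V] (hs : SimpleOriented E)
    (hnc : ¬ TwoCyclesConnected E) :
    ∀ (n : ℕ) (x : V), {z | ReflTransGen E z x}.ncard ≤ n → ¬ IsCycleVertex E x →
      ∀ (a : V), IsCycleVertex E a → ReflTransGen E x a →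
      ∀ w : List V,
      (∀ (t : V) (p u q : List V), w = p ++ [t] ++ u ++ [t] ++ q → ¬ NArrowTo E u t) →
      w.count x ≤ kxF E x := by
  intro n
  induction n with
  | zero =>
    intro x hn _ _ _ _ _ _
    have hxmem : x ∈ {z | ReflTransGen E z x} := ReflTransGen.refl
    have := (Set.ncard_pos (Set.toFinite _)).2 ⟨x, hxmem⟩
    omega
  | succ n ih =>
    intro x hn hx a ha hxa w hw
    classical
    set P : Finset V := Finset.univ.filter (fun y => E y x) with hPdef
    have hP : ∀ y, y ∈ P ↔ E y x := by intro y; simp [hPdef]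
    have hwx : ∀ p u q, w = p ++ [x] ++ u ++ [x] ++ q → x ∈ u ∨ ∃ y ∈ u, E y x := by
      intro p u q h
      by_contra hcon
      push_neg at hcon
      exact hw x p u q h ⟨hcon.1, hcon.2⟩
    have hcount := count_le_main hs x P hP w hwx
    have hky : ∀ y ∈ P, w.count y ≤ kxF E y := by
      intro y hy
      have hyx : E y x := (hP y).1 hy
      have hycyc : ¬ IsCycleVertex E y := fun hyc =>
        no_cycle_above hs hnc hx ha hxa hyc (ReflTransGen.single hyx)
      have hanc : {z | ReflTransGen E z y} ⊂ {z | ReflTransGen E z x} := by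
        rw [Set.ssubset_def]
        constructor
        · intro z hz; exact ReflTransGen.tail hz hyx
        · intro hsub
          have hxy : ReflTransGen E x y := hsub (ReflTransGen.refl)
          obtain ⟨c, hc, hxc, -⟩ := closed_walk_cycle hs hxy hyx
          exact hx ⟨c, hc, hxc⟩
      have hlt : {z | ReflTransGen E z y}.ncard ≤ n := by
        have := Set.ncard_lt_ncard hanc (Set.toFinite _)
        omega
      exact ih y hlt hycyc a ha (ReflTransGen.head hyx hxa) w hw
    have hrec := kxF_succ_le hs hnc hx ha hxa P hP
    have hsum : ∑ y ∈ P, w.count y ≤ ∑ y ∈ P, kxF E y := Finset.sum_le_sum hky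
    omega

private lemma simpleCycle_flip {c : List V} (hc : IsSimpleCycle E c) :
    IsSimpleCycle (flip E) c.reverse := by
  obtain ⟨hlen, hnd, hch, hcyc⟩ := hc
  have hne : c ≠ [] := by rintro rfl; simp at hlen
  refine ⟨by simpa using hlen, by simpa using hnd, List.isChain_reverse.2 hch, ?_⟩
  intro h
  have h1 : c.reverse.getLast h = c.head hne := Option.some.inj (by
    rw [← List.getLast?_eq_getLast h, List.getLast?_reverse, List.head?_eq_head hne])
  have h2 : c.reverse.head h = c.getLast hne := Option.some.inj (by
    rw [← List.head?_eq_head h, List.head?_reverse, List.getLast?_eq_getLast hne])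
  rw [h1, h2]
  exact hcyc hne

private lemma cycVert_flip {x : V} : IsCycleVertex (flip E) x ↔ IsCycleVertex E x := by
  constructor
  · rintro ⟨c, hc, hm⟩
    exact ⟨c.reverse, simpleCycle_flip (E := flip E) hc, List.mem_reverse.2 hm⟩
  · rintro ⟨c, hc, hm⟩
    exact ⟨c.reverse, simpleCycle_flip hc, List.mem_reverse.2 hm⟩

private lemma twoCycles_flip (h : TwoCyclesConnected (flip E)) : TwoCyclesConnected E := by
  obtain ⟨c, c', hc, hc', hrot, a, ha, b, hb, hab⟩ := h
  refine ⟨c'.reverse, c.reverse, simpleCycle_flip (E := flip E) hc',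
    simpleCycle_flip (E := flip E) hc, ?_, b, List.mem_reverse.2 hb, a,
    List.mem_reverse.2 ha, ?_⟩
  · intro h'
    exact hrot (List.isRotated_reverse_iff.1 h'.symm)
  · exact hab.swap

end Aux

/-- Under the no-two-connected-cycles hypothesis, a non-cycle vertex `x`
connected with some simple cycle by an oriented path occurs at most `k_x` times in every
reduced word. -/
theorem noncycle_vertex_count_le_kx
    {V : Type*} [Fintype V] [LinearOrder V] (E : V → V → Prop)
    (hsimple : SimpleOriented E)
    (hnc : ¬ TwoCyclesConnected E)
    (x : V) (hx : ¬ IsCycleVertex E x)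
    (hconn : ∃ a, IsCycleVertex E a ∧
      (Relation.ReflTransGen E x a ∨ Relation.ReflTransGen E a x))
    (w : List V) (hred : Reduced E (· < ·) w) :
    w.count x ≤ kx E x := by
  classical
  obtain ⟨h1, h2, -⟩ := hred
  obtain ⟨a, ha, hpath⟩ := hconn
  rw [kx]
  by_cases hcase : ∃ a, IsCycleVertex E a ∧ Relation.ReflTransGen E x a
  · rw [if_pos hcase]
    obtain ⟨a', ha', hxa'⟩ := hcase
    have hw : ∀ (t : V) (p u q : List V), w = p ++ [t] ++ u ++ [t] ++ q →
        ¬ NArrowTo E u t := fun t p u q heq hna => h1 ⟨p, u, q, t, heq, hna⟩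
    exact fwd_main hsimple hnc _ x le_rfl hx a' ha' hxa' w hw
  · rw [if_neg hcase]
    have hax : Relation.ReflTransGen E a x := by
      rcases hpath with h | h
      · exact absurd ⟨a, ha, h⟩ hcase
      · exact h
    have hs' : SimpleOriented (flip E) := fun u v h h' => hsimple v u h h'
    have hnc' : ¬ TwoCyclesConnected (flip E) := fun h => hnc (twoCycles_flip h)
    have hx' : ¬ IsCycleVertex (flip E) x := fun h => hx (cycVert_flip.1 h)
    have ha' : IsCycleVertex (flip E) a := cycVert_flip.2 ha
    have hxa' : Relation.ReflTransGen (flip E) x a := hax.swap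
    have hw : ∀ (t : V) (p u q : List V), w = p ++ [t] ++ u ++ [t] ++ q →
        ¬ NArrowTo (flip E) u t :=
      fun t p u q heq hna => h2 ⟨p, u, q, t, heq, hna.1, fun y hy => hna.2 y hy⟩
    have hcount := fwd_main hs' hnc' _ x le_rfl hx' a ha' hxa' w hw
    have himg : SxF (flip E) x
        = List.reverse '' {p : List V | p ≠ [] ∧ p.Chain' E ∧ p.head? = some x} := by
      ext p
      constructor
      · rintro ⟨hne, hch, hl⟩
        refine ⟨p.reverse, ⟨by simpa using hne, List.isChain_reverse.2 hch, ?_⟩, by simp⟩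
        simpa using hl
      · rintro ⟨q, ⟨hne, hch, hh⟩, rfl⟩
        refine ⟨by simpa using hne, List.isChain_reverse.2 hch, ?_⟩
        simpa using hh
    have hkx : kxF (flip E) x
        = {p : List V | p ≠ [] ∧ p.Chain' E ∧ p.head? = some x}.ncard := by
      rw [kxF, himg, Set.ncard_image_of_injective _ List.reverse_injective]
    rw [← hkx]
    exact hcount
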